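/- Let f : ℕ → (0,∞) be defined by f(1) = f(2) = 1 and f(n) = (log log n)/n for n ≥ 3, and let c > 0 be such that for every μ ∈ ℝ, with X_1, X_2, … i.i.d. ∼ N(μ,1) and μ̃_n = (Σ_{i=1}^n X_i)/(n+1), one has P_μ( (μ − μ̃_n)² ≥ c·f(n) for infinitely many n ) = 1. Then for every estimator μ̂ = (μ̂_n)_{n∈ℕ} (each μ̂_n : ℝⁿ → ℝ measurable), at least one of the following holds: (a) there exists C > 0 with sup_{μ∈ℝ} sup_{τ∈𝒯} E_{X^∞∼N(μ,1)^{⊗ℕ}}[ (μ − μ̂_τ(X^τ))² / f(τ) ] ≥ C, and for every nonincreasing g : ℕ → (0,∞) with f(n)/g(n) → ∞, sup_{μ∈ℝ} sup_{τ∈𝒯} E_{X^∞∼N(μ,1)^{⊗ℕ}}[ (μ − μ̂_τ(X^τ))² / g(τ) ] = ∞; or (b) for every μ ∈ ℝ, P_μ( (μ̃_n − μ̂_n(X^n))² ≥ (c/2)·f(n) for infinitely many n ) = 1. -/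

import Mathlib

open MeasureTheory ProbabilityTheory Filter

/-- The time-robust rate function: `f n = (log log n)/n` for `n ≥ 3`, `f 1 = f 2 = 1`. -/
noncomputable def f (n : ℕ) : ℝ := if n ≤ 2 then 1 else Real.log (Real.log n) / n

/-- The natural filtration of the data: `natFilt X hX n = σ(X_0, …, X_{n-1})`,
the σ-algebra generated by the first `n` observations. -/
noncomputable def natFilt {Ω β : Type*} [mΩ : MeasurableSpace Ω] [MeasurableSpace β]
    (X : ℕ → Ω → β) (hX : ∀ i, Measurable (X i)) : Filtration ℕ mΩ where
  seq n := ⨆ i ∈ Finset.range n, MeasurableSpace.comap (X i) inferInstance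
  mono' := fun _ _ hnm => biSup_mono fun _ hi =>
    Finset.mem_range.mpr (lt_of_lt_of_le (Finset.mem_range.mp hi) hnm)
  le' _ := iSup₂_le fun i _ => (hX i).comap_le


open scoped ENNReal NNReal

lemma f_pos (n : ℕ) : 0 < f n := by
  unfold f
  split_ifs with h
  · exact one_pos
  · push_neg at h
    have h3 : (3 : ℝ) ≤ (n : ℝ) := by exact_mod_cast h
    have hlog : 1 < Real.log n := by
      rw [Real.lt_log_iff_exp_lt (by linarith)]
      calc Real.exp 1 < 2.7182818286 := Real.exp_one_lt_d9
        _ < 3 := by norm_num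
        _ ≤ n := h3
    exact div_pos (Real.log_pos hlog) (by linarith)

lemma sq_lower {a b F c : ℝ} (h1 : c * F ≤ a ^ 2) (h2 : b ^ 2 < c / 2 * F) :
    c / 12 * F ≤ (a + b) ^ 2 := by
  nlinarith [sq_nonneg (3 * a + 4 * b)]

/-- suppose `c > 0` is such that for every `μ`, almost surely
`(μ - μ̃ n)² ≥ c f n` infinitely often, where `μ̃ n = (Σ_{i<n} X i)/(n+1)` is the posterior
mean for the standard Gaussian prior and the data is i.i.d. `N(μ,1)`. Then every estimator
`μ̂` satisfies (a): a positive lower bound `C` on `sup_μ sup_τ E[(μ - μ̂_τ)²/f(τ)]` together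
with `sup_μ sup_τ E[(μ - μ̂_τ)²/g(τ)] = ∞` for every nonincreasing `g` with `f/g → ∞`; or
(b): for every `μ`, almost surely `(μ̃ n - μ̂ n (X^n))² ≥ (c/2) f n` infinitely often. -/
theorem estimator_dichotomy
    (Ω : Type) (mΩ : MeasurableSpace Ω) (P : ℝ → Measure Ω)
    (hP : ∀ μ, IsProbabilityMeasure (P μ))
    (X : ℕ → Ω → ℝ) (hX : ∀ i, Measurable (X i))
    (hindep : ∀ μ, iIndepFun X (P μ))
    (hlaw : ∀ μ i, Measure.map (X i) (P μ) = gaussianReal μ 1)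
    (mutilde : ℕ → Ω → ℝ)
    (hmutilde : mutilde = fun n ω => (∑ i ∈ Finset.range n, X i ω) / ((n : ℝ) + 1))
    (c : ℝ) (hc : 0 < c)
    (hcio : ∀ μ : ℝ, ∀ᵐ ω ∂P μ, ∃ᶠ n in atTop, c * f n ≤ (μ - mutilde n ω) ^ 2)
    (muhat : (n : ℕ) → (Fin n → ℝ) → ℝ) (hmeas : ∀ n, Measurable (muhat n)) :
    (∃ C : ℝ, 0 < C ∧
        ENNReal.ofReal C ≤
          (⨆ (μ : ℝ) (τ : Ω → ℕ) (_ : IsStoppingTime (natFilt X hX) (fun ω => (τ ω : WithTop ℕ))),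
            ∫⁻ ω, ENNReal.ofReal
              ((μ - muhat (τ ω) fun i => X i.val ω) ^ 2 / f (τ ω)) ∂(P μ)) ∧
        ∀ g : ℕ → ℝ, (∀ n, 0 < g n) → Antitone g →
          Tendsto (fun n => f n / g n) atTop atTop →
          (⨆ (μ : ℝ) (τ : Ω → ℕ) (_ : IsStoppingTime (natFilt X hX) (fun ω => (τ ω : WithTop ℕ))),
            ∫⁻ ω, ENNReal.ofReal
              ((μ - muhat (τ ω) fun i => X i.val ω) ^ 2 / g (τ ω)) ∂(P μ)) = ⊤) ∨
      (∀ μ : ℝ, ∀ᵐ ω ∂P μ, ∃ᶠ n in atTop,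
        c / 2 * f n ≤ (mutilde n ω - muhat n fun i => X i.val ω) ^ 2) := by
  by_cases hb : ∀ μ : ℝ, ∀ᵐ ω ∂P μ, ∃ᶠ n in atTop,
      c / 2 * f n ≤ (mutilde n ω - muhat n fun i => X i.val ω) ^ 2
  · exact Or.inr hb
  left
  push_neg at hb
  obtain ⟨μ₀, hμ₀⟩ := hb
  haveI := hP μ₀
  set c₁ : ℝ := c / 12 with hc₁def
  have hc₁ : 0 < c₁ := by positivity
  -- the process
  set u : ℕ → Ω → ℝ :=
    fun n ω => (μ₀ - muhat n fun i : Fin n => X i.val ω) ^ 2 - c₁ * f n with hu_def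
  -- measurability of u n w.r.t. natFilt n
  have hu_meas : ∀ n, Measurable[(natFilt X hX) n] (u n) := by
    intro n
    have hXn : Measurable[(natFilt X hX) n] (fun ω => (fun i : Fin n => X i.val ω)) := by
      rw [measurable_iff_comap_le, MeasurableSpace.pi, MeasurableSpace.comap_iSup]
      refine iSup_le fun i => ?_
      rw [MeasurableSpace.comap_comp]
      exact le_biSup (fun j => MeasurableSpace.comap (X j) inferInstance)
        (Finset.mem_range.mpr i.isLt)
    exact ((measurable_const.sub ((hmeas n).comp hXn)).pow_const 2).sub measurable_const
  have hu_adapted : Adapted (natFilt X hX) u := fun n => hu_meas n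
  have humeas' : ∀ n, Measurable (u n) :=
    fun n => (hu_meas n).mono ((natFilt X hX).le n) le_rfl
  -- the good event A
  set D : Set Ω := {ω | ¬ ∃ᶠ n in atTop,
    c / 2 * f n ≤ (mutilde n ω - muhat n fun i => X i.val ω) ^ 2} with hD_def
  set G : Set Ω := {ω | ∃ᶠ n in atTop, c * f n ≤ (μ₀ - mutilde n ω) ^ 2} with hG_def
  set A : Set Ω := D ∩ G with hA_def
  have hD_pos : P μ₀ D ≠ 0 := by
    rw [frequently_ae_iff] at hμ₀
    simpa [hD_def, not_frequently, not_le] using hμ₀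
  have hA_eq : P μ₀ A = P μ₀ D := by
    have hGc : P μ₀ Gᶜ = 0 := by
      have h := hcio μ₀
      rw [ae_iff] at h
      simpa [hG_def, Set.compl_setOf] using h
    have : A = D \ Gᶜ := by
      simp [hA_def, Set.diff_eq]
    rw [this, measure_diff_null hGc]
  have hA_pos : P μ₀ A ≠ 0 := hA_eq ▸ hD_pos
  -- on A, the hitting condition occurs infinitely often
  have hA_cond : ∀ ω ∈ A, ∀ N : ℕ, ∃ n, N ≤ n ∧ u n ω ∈ Set.Ici (0 : ℝ) := by
    intro ω hω N
    obtain ⟨hωD, hωG⟩ := hω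
    rw [hD_def, Set.mem_setOf_eq, not_frequently] at hωD
    have hfreq := (hωG.and_eventually hωD)
    obtain ⟨n, hn, h1, h2⟩ := (frequently_atTop.mp hfreq) N
    refine ⟨n, hn, ?_⟩
    rw [not_le] at h2
    have key : c / 12 * f n ≤ ((μ₀ - mutilde n ω) + (mutilde n ω - muhat n fun i => X i.val ω)) ^ 2 :=
      sq_lower h1 h2
    have heq : (μ₀ - mutilde n ω) + (mutilde n ω - muhat n fun i => X i.val ω)
        = μ₀ - muhat n fun i => X i.val ω := by ring
    rw [heq] at key
    simp only [hu_def, Set.mem_Ici, hc₁def]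
    linarith
  -- the events E N M
  set E : ℕ → ℕ → Set Ω := fun N M => ⋃ j ∈ Set.Icc N M, (u j) ⁻¹' (Set.Ici (0:ℝ))
    with hE_def
  have hE_meas : ∀ N M, MeasurableSet (E N M) := fun N M =>
    MeasurableSet.biUnion (Set.to_countable _) fun j _ => (humeas' j) measurableSet_Ici
  have hE_mono : ∀ N, Monotone (E N) := by
    intro N M M' hMM'
    exact Set.biUnion_subset_biUnion_left (Set.Icc_subset_Icc_right hMM')
  have hA_sub : ∀ N, A ⊆ ⋃ M, E N M := by
    intro N ω hω
    obtain ⟨n, hn, hun⟩ := hA_cond ω hω N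
    exact Set.mem_iUnion.mpr ⟨n, Set.mem_biUnion ⟨hn, le_rfl⟩ hun⟩
  have hkey : ∀ N : ℕ, ∃ M, N ≤ M ∧ P μ₀ A / 2 < P μ₀ (E N M) := by
    intro N
    have h1 : P μ₀ A ≤ ⨆ M, P μ₀ (E N M) := by
      rw [← Directed.measure_iUnion ((hE_mono N).directed_le)]
      exact measure_mono (hA_sub N)
    have h2 : P μ₀ A / 2 < P μ₀ A :=
      ENNReal.half_lt_self hA_pos (ne_top_of_le_ne_top (by simp) (measure_mono (Set.subset_univ A)))
    obtain ⟨M, hM⟩ := lt_iSup_iff.mp (lt_of_lt_of_le h2 h1)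
    exact ⟨max N M, le_max_left _ _, lt_of_lt_of_le hM (measure_mono (hE_mono N (le_max_right N M)))⟩
  -- main integral bound
  have main : ∀ (h : ℕ → ℝ), (∀ n, 0 < h n) → ∀ (L : ℝ) (N M : ℕ), N ≤ M →
      (∀ n, N ≤ n → n ≤ M → L * h n ≤ c₁ * f n) →
      ENNReal.ofReal L * P μ₀ (E N M) ≤
        ⨆ (μ : ℝ) (τ : Ω → ℕ) (_ : IsStoppingTime (natFilt X hX) (fun ω => (τ ω : WithTop ℕ))),
          ∫⁻ ω, ENNReal.ofReal
            ((μ - muhat (τ ω) fun i => X i.val ω) ^ 2 / h (τ ω)) ∂(P μ) := by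
    intro h hh L N M hNM hL
    set τ : Ω → ℕ := hittingBtwn u (Set.Ici (0:ℝ)) N M with hτ_def
    have hτ : IsStoppingTime (natFilt X hX) (fun ω => (τ ω : WithTop ℕ)) :=
      Adapted.isStoppingTime_hittingBtwn hu_adapted measurableSet_Ici
    refine le_trans ?_ (le_iSup_of_le μ₀ (le_iSup_of_le τ (le_iSup_of_le hτ le_rfl)))
    have hpt : ∀ ω ∈ E N M, ENNReal.ofReal L ≤
        ENNReal.ofReal ((μ₀ - muhat (τ ω) fun i => X i.val ω) ^ 2 / h (τ ω)) := by
      intro ω hω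
      have hex : ∃ j ∈ Set.Icc N M, u j ω ∈ Set.Ici (0:ℝ) := by
        simpa [hE_def] using hω
      have hmem := stoppedValue_hittingBtwn_mem hex
      simp only [stoppedValue, WithTop.untopA, WithTop.untopD_coe, Set.mem_Ici, hu_def] at hmem
      have hτN : N ≤ τ ω := le_hittingBtwn hNM ω
      have hτM : τ ω ≤ M := hittingBtwn_le ω
      apply ENNReal.ofReal_le_ofReal
      rw [le_div_iff₀ (hh (τ ω))]
      calc L * h (τ ω) ≤ c₁ * f (τ ω) := hL _ hτN hτM
        _ ≤ (μ₀ - muhat (τ ω) fun i => X i.val ω) ^ 2 := by linarith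
    calc ENNReal.ofReal L * P μ₀ (E N M)
        = ∫⁻ ω, (E N M).indicator (fun _ => ENNReal.ofReal L) ω ∂(P μ₀) := by
          rw [lintegral_indicator_const (hE_meas N M)]
      _ ≤ ∫⁻ ω, ENNReal.ofReal
            ((μ₀ - muhat (τ ω) fun i => X i.val ω) ^ 2 / h (τ ω)) ∂(P μ₀) :=
          lintegral_mono (Set.indicator_le hpt)
  -- conclude
  have hPA_ne_top : P μ₀ A ≠ ⊤ := measure_ne_top _ _
  set q : ℝ≥0∞ := P μ₀ A / 2 with hq_def
  have hq_ne_top : q ≠ ⊤ :=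
    ne_top_of_le_ne_top hPA_ne_top (ENNReal.half_le_self)
  have hq_ne : q ≠ 0 := by
    intro h
    rw [hq_def, ENNReal.div_eq_zero_iff] at h
    exact hA_pos (h.resolve_right ENNReal.ofNat_ne_top)
  have hqR : 0 < q.toReal := ENNReal.toReal_pos hq_ne hq_ne_top
  refine ⟨c₁ * q.toReal, by positivity, ?_, ?_⟩
  · obtain ⟨M₀, hM₀le, hM₀⟩ := hkey 0
    have h1 : ENNReal.ofReal (c₁ * q.toReal) = ENNReal.ofReal c₁ * q := by
      rw [ENNReal.ofReal_mul hc₁.le, ENNReal.ofReal_toReal hq_ne_top]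
    rw [h1]
    refine le_trans ?_ (main f f_pos c₁ 0 M₀ hM₀le fun n _ _ => le_rfl)
    exact mul_le_mul_right hM₀.le _
  · intro g hg hganti hgf
    set S := (⨆ (μ : ℝ) (τ : Ω → ℕ) (_ : IsStoppingTime (natFilt X hX) (fun ω => (τ ω : WithTop ℕ))),
        ∫⁻ ω, ENNReal.ofReal
          ((μ - muhat (τ ω) fun i => X i.val ω) ^ 2 / g (τ ω)) ∂(P μ)) with hS_def
    by_contra hS
    set K : ℝ := (S.toReal + 1) / (c₁ * q.toReal) with hK_def
    have hK_pos : 0 < K := by positivity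
    obtain ⟨N, hN⟩ := eventually_atTop.mp (hgf.eventually_ge_atTop K)
    obtain ⟨M, hNM, hM⟩ := hkey N
    have hcond : ∀ n, N ≤ n → n ≤ M → (c₁ * K) * g n ≤ c₁ * f n := by
      intro n hn _
      have h2 := hN n hn
      have hgpos := hg n
      rw [le_div_iff₀ hgpos] at h2
      nlinarith
    have hmain := main g hg (c₁ * K) N M hNM hcond
    have hlb : ENNReal.ofReal (c₁ * K) * q ≤ S :=
      le_trans (mul_le_mul_right hM.le _) hmain
    have hval : c₁ * K * q.toReal = S.toReal + 1 := by
      rw [hK_def]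
      field_simp
    have h3 : ENNReal.ofReal (S.toReal + 1) ≤ S := by
      calc ENNReal.ofReal (S.toReal + 1) = ENNReal.ofReal (c₁ * K * q.toReal) := by rw [hval]
        _ = ENNReal.ofReal (c₁ * K) * q := by
            rw [ENNReal.ofReal_mul (by positivity), ENNReal.ofReal_toReal hq_ne_top]
        _ ≤ S := hlb
    have h4 : S < ENNReal.ofReal (S.toReal + 1) := by
      calc S = ENNReal.ofReal S.toReal := (ENNReal.ofReal_toReal hS).symm
        _ < ENNReal.ofReal (S.toReal + 1) :=
            (ENNReal.ofReal_lt_ofReal_iff (by positivity)).mpr (by linarith)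
    exact absurd (lt_of_lt_of_le h4 h3) (lt_irrefl S)
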